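/- Closure under joins: if P and P' are two NN-bisimulations of a neural network N, then the partition generated by the union of their equivalence relations (the transitive closure of P ∪ P', taken layerwise) is also an NN-bisimulation of N. Consequently, there exists a coarsest NN-bisimulation of N. -/
import Mathlib


/-- One-step (layer) semantics of a neural network layer. -/
def layerSem {α β : Type*} [Fintype α] (W : α → β → ℝ) (b : β → ℝ) (A : β → ℝ → ℝ)
    (v : α → ℝ) : β → ℝ :=
  fun s' => A s' ((∑ s, W s s' * v s) + b s')

open Classical in
/-- Pre-sum of a set of previous-layer nodes into a node `s'`. -/
noncomputable def preSum {α β : Type*} [Fintype α] (W : α → β → ℝ) (c : Set α) (s' : β) : ℝ :=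
  ∑ s ∈ Finset.univ.filter (fun s => s ∈ c), W s s'

/-- A valuation is `P`-consistent if it is constant on classes. -/
def consistent {α : Type*} (P : Setoid α) (v : α → ℝ) : Prop :=
  ∀ s₁ s₂, P.r s₁ s₂ → v s₁ = v s₂

/-- One layer of the NN-bisimulation condition. -/
def isBisimStep {α β : Type*} [Fintype α] (W : α → β → ℝ) (b : β → ℝ) (A : β → ℝ → ℝ)
    (Pp : Setoid α) (Pn : Setoid β) : Prop :=
  ∀ s₁ s₂ : β, Pn.r s₁ s₂ →
    A s₁ = A s₂ ∧ b s₁ = b s₂ ∧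
    ∀ t : α, preSum W {x | Pp.r x t} s₁ = preSum W {x | Pp.r x t} s₂

/-- One layer of the δ-NN-bisimulation condition. -/
def isDeltaBisimStep {α β : Type*} [Fintype α] (W : α → β → ℝ) (b : β → ℝ) (A : β → ℝ → ℝ)
    (Pp : Setoid α) (Pn : Setoid β) (δ : ℝ) : Prop :=
  ∀ s₁ s₂ : β, Pn.r s₁ s₂ →
    A s₁ = A s₂ ∧ |b s₁ - b s₂| ≤ δ ∧
    ∀ t : α, |preSum W {x | Pp.r x t} s₁ - preSum W {x | Pp.r x t} s₂| ≤ δ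

/-- Semantics of the composition of the first `i` layers of a network. -/
def netSem (S : ℕ → Type) [∀ i, Fintype (S i)] (W : ∀ i, S i → S (i+1) → ℝ)
    (b : ∀ i, S (i+1) → ℝ) (A : ∀ i, S (i+1) → ℝ → ℝ) : (i : ℕ) → (S 0 → ℝ) → S i → ℝ
  | 0, v => v
  | (i+1), v => layerSem (W i) (b i) (A i) (netSem S W b A i v)

/-- Quotient weights: pre-sum of a class into a representative. -/
noncomputable def qW {α β : Type*} [Fintype α] (Pp : Setoid α) (Pn : Setoid β)
    (W : α → β → ℝ) (c : Quotient Pp) (d : Quotient Pn) : ℝ :=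
  preSum W {x | Quotient.mk Pp x = c} d.out

/-- Quotient bias via representative. -/
noncomputable def qb {β : Type*} (Pn : Setoid β) (b : β → ℝ) (d : Quotient Pn) : ℝ := b d.out

/-- Quotient activation via representative. -/
noncomputable def qA {β : Type*} (Pn : Setoid β) (A : β → ℝ → ℝ) (d : Quotient Pn) : ℝ → ℝ :=
  A d.out

/-- Abstraction of a `P`-consistent valuation. -/
noncomputable def absVal {α : Type*} (P : Setoid α) (v : α → ℝ) (c : Quotient P) : ℝ := v c.out

/-- `vh` is an ε-abstraction of `v`. -/
def isEpsAbs {α : Type*} (P : Setoid α) (ε : ℝ) (v : α → ℝ) (vh : Quotient P → ℝ) : Prop :=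
  ∀ s : α, |vh (Quotient.mk P s) - v s| ≤ ε

/-- `v` is (ε,P)-consistent. -/
def epsConsistent {α : Type*} (P : Setoid α) (ε : ℝ) (v : α → ℝ) : Prop :=
  ∀ s₁ s₂, P.r s₁ s₂ → |v s₁ - v s₂| ≤ ε



section Aux
open Classical

lemma preSum_congr {α β : Type*} [Fintype α] (W : α → β → ℝ) (c : Set α) (Pp : Setoid α)
    (hsat : ∀ x y, Pp.r x y → (x ∈ c ↔ y ∈ c)) {s₁ s₂ : β}
    (h : ∀ t, preSum W {x | Pp.r x t} s₁ = preSum W {x | Pp.r x t} s₂) :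
    preSum W c s₁ = preSum W c s₂ := by
  classical
  have key : ∀ s' : β, preSum W c s' =
      ∑ q : Quotient Pp, (if q.out ∈ c then preSum W {x | Pp.r x q.out} s' else 0) := by
    intro s'
    have hfib := Finset.sum_fiberwise_eq_sum_filter (Finset.univ.filter (fun s => s ∈ c))
      Finset.univ (Quotient.mk Pp) (fun s => W s s')
    simp only [Finset.mem_univ, Finset.filter_true, Finset.filter_true_of_mem,
      fun _ _ => trivial] at hfib
    unfold preSum
    rw [← hfib]
    refine Finset.sum_congr rfl (fun q _ => ?_)
    by_cases hq : q.out ∈ c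
    · rw [if_pos hq]
      refine Finset.sum_congr ?_ (fun _ _ => rfl)
      ext x
      simp only [Finset.mem_filter, Finset.mem_univ, true_and, Set.mem_setOf_eq]
      constructor
      · rintro ⟨hxc, hxq⟩
        exact Quotient.exact (hxq.trans (Quotient.out_eq q).symm)
      · intro hr
        exact ⟨(hsat x q.out hr).2 hq, (Quotient.sound hr).trans (Quotient.out_eq q)⟩
    · rw [if_neg hq]
      have hemp : Finset.filter (fun i => Quotient.mk Pp i = q)
          (Finset.univ.filter (fun s => s ∈ c)) = ∅ := by
        ext x
        simp only [Finset.mem_filter, Finset.mem_univ, true_and, Finset.notMem_empty,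
          iff_false, not_and]
        intro hxc hxq
        exact hq ((hsat x q.out (Quotient.exact (hxq.trans (Quotient.out_eq q).symm))).1 hxc)
      rw [hemp, Finset.sum_empty]
  rw [key s₁, key s₂]
  refine Finset.sum_congr rfl (fun q _ => ?_)
  by_cases hq : q.out ∈ c
  · rw [if_pos hq, if_pos hq, h q.out]
  · rw [if_neg hq, if_neg hq]

lemma step_sSup {α β : Type*} [Fintype α] (W : α → β → ℝ) (b : β → ℝ) (A : β → ℝ → ℝ)
    (Bp : Set (Setoid α)) (Bn : Set (Setoid β))
    (h : ∀ Pn ∈ Bn, ∃ Pp ∈ Bp, isBisimStep W b A Pp Pn) :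
    isBisimStep W b A (sSup Bp) (sSup Bn) := by
  intro s₁ s₂ hr
  rw [Setoid.sSup_eq_eqvGen] at hr
  have hr' : Relation.EqvGen (fun x y => ∃ r : Setoid β, r ∈ Bn ∧ r.r x y) s₁ s₂ := hr
  clear hr
  induction hr' with
  | rel x y hxy =>
    obtain ⟨Pn, hPn, hxy⟩ := hxy
    obtain ⟨Pp, hPp, hstep⟩ := h Pn hPn
    obtain ⟨hA, hb, hps⟩ := hstep x y hxy
    refine ⟨hA, hb, fun t => ?_⟩
    refine preSum_congr W _ Pp (fun a b hab => ?_) hps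
    have hle : Pp ≤ sSup Bp := le_sSup hPp
    have h1 : (sSup Bp).r a b := Setoid.le_def.mp hle hab
    constructor
    · intro hac
      exact Setoid.trans' _ (Setoid.symm' _ h1) hac
    · intro hbc
      exact Setoid.trans' _ h1 hbc
  | refl x => exact ⟨rfl, rfl, fun _ => rfl⟩
  | symm x y _ ih => exact ⟨ih.1.symm, ih.2.1.symm, fun t => (ih.2.2 t).symm⟩
  | trans x y z _ _ ih1 ih2 =>
    exact ⟨ih1.1.trans ih2.1, ih1.2.1.trans ih2.2.1, fun t => (ih1.2.2 t).trans (ih2.2.2 t)⟩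

end Aux

/-- bisimulations are closed under (layerwise) joins of equivalence
relations; consequently there exists a coarsest NN-bisimulation. -/
theorem bisim_closed_under_join (S : ℕ → Type) [∀ i, Fintype (S i)]
    (W : ∀ i, S i → S (i+1) → ℝ) (b : ∀ i, S (i+1) → ℝ) (A : ∀ i, S (i+1) → ℝ → ℝ)
    (P P' : ∀ i, Setoid (S i))
    (hP : ∀ i, isBisimStep (W i) (b i) (A i) (P i) (P (i+1)))
    (hP' : ∀ i, isBisimStep (W i) (b i) (A i) (P' i) (P' (i+1))) :
    (∀ i, isBisimStep (W i) (b i) (A i) (P i ⊔ P' i) (P (i+1) ⊔ P' (i+1))) ∧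
    ∃ Q : ∀ i, Setoid (S i),
      (∀ i, isBisimStep (W i) (b i) (A i) (Q i) (Q (i+1))) ∧
      ∀ R : ∀ i, Setoid (S i),
        (∀ i, isBisimStep (W i) (b i) (A i) (R i) (R (i+1))) → ∀ i, R i ≤ Q i := by
  
  constructor
  · intro i
    have := step_sSup (W i) (b i) (A i) {P i, P' i} {P (i+1), P' (i+1)} ?_
    · rwa [sSup_pair, sSup_pair] at this
    · rintro Pn (rfl | rfl)
      · exact ⟨P i, Set.mem_insert _ _, hP i⟩
      · exact ⟨P' i, Set.mem_insert_of_mem _ rfl, hP' i⟩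
  · set B : Set (∀ i, Setoid (S i)) :=
      {R | ∀ i, isBisimStep (W i) (b i) (A i) (R i) (R (i+1))} with hB
    refine ⟨fun i => sSup ((fun R => R i) '' B), fun i => ?_, fun R hR i => ?_⟩
    · refine step_sSup (W i) (b i) (A i) _ _ ?_
      rintro Pn ⟨R, hRB, rfl⟩
      exact ⟨R i, ⟨R, hRB, rfl⟩, hRB i⟩
    · exact le_sSup ⟨R, hR, rfl⟩
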